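/- (Lemma 1) Let I be a nonempty finite index set and let τ(i) ∈ T_im for all i ∈ I. For ε > 0 define T(ε) = {t ∈ T : dist(t, conv{τ(i) : i ∈ I}) ≥ ε} (Euclidean distance to the convex hull) and X(ε) = {x ∈ ℝⁿ : A(x)τ(i) ≥ 0 componentwise for all i ∈ I, and tᵀA(x)t ≥ 0 for all t ∈ T(ε)}. Then there exists ε₀ > 0 such that X(ε₀) = X. -/

import Mathlib

open Matrix

/-- The constraint matrix function `𝓐(x) = A₀ + ∑ i xᵢ Aᵢ`. -/
def Amap (p n : ℕ) (A₀ : Matrix (Fin p) (Fin p) ℝ)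
    (A : Fin n → Matrix (Fin p) (Fin p) ℝ) (x : Fin n → ℝ) :
    Matrix (Fin p) (Fin p) ℝ :=
  A₀ + ∑ i, x i • A i

/-- The feasible set `X = {x : tᵀ𝓐(x)t ≥ 0 ∀ t ∈ ℝ₊ᵖ}`. -/
def feasSet (p n : ℕ) (A₀ : Matrix (Fin p) (Fin p) ℝ)
    (A : Fin n → Matrix (Fin p) (Fin p) ℝ) : Set (Fin n → ℝ) :=
  {x | ∀ t : Fin p → ℝ, (∀ k, 0 ≤ t k) → 0 ≤ t ⬝ᵥ (Amap p n A₀ A x *ᵥ t)}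

/-- The normalized immobile index set `T_im = {t ∈ T : tᵀ𝓐(x)t = 0 ∀ x ∈ X}`. -/
def normImmobile (p n : ℕ) (A₀ : Matrix (Fin p) (Fin p) ℝ)
    (A : Fin n → Matrix (Fin p) (Fin p) ℝ) : Set (Fin p → ℝ) :=
  {t | (∀ k, 0 ≤ t k) ∧ (∑ k, t k) = 1 ∧
    ∀ x ∈ feasSet p n A₀ A, t ⬝ᵥ (Amap p n A₀ A x *ᵥ t) = 0}

/-- The immobile index set `R_im = {t ∈ ℝ₊ᵖ : tᵀ𝓐(x)t = 0 ∀ x ∈ X}`. -/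
def immobile (p n : ℕ) (A₀ : Matrix (Fin p) (Fin p) ℝ)
    (A : Fin n → Matrix (Fin p) (Fin p) ℝ) : Set (Fin p → ℝ) :=
  {t | (∀ k, 0 ≤ t k) ∧ ∀ x ∈ feasSet p n A₀ A, t ⬝ᵥ (Amap p n A₀ A x *ᵥ t) = 0}

lemma aux_cross {p : ℕ} {M : Matrix (Fin p) (Fin p) ℝ} (hM : M.IsSymm) (a b : Fin p → ℝ) :
    a ⬝ᵥ M *ᵥ b = b ⬝ᵥ M *ᵥ a := by
  conv_lhs => rw [Matrix.dotProduct_mulVec, ← hM.eq, Matrix.vecMul_transpose]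
  exact dotProduct_comm _ _

lemma aux_expand {p : ℕ} {M : Matrix (Fin p) (Fin p) ℝ} (hM : M.IsSymm) (s h : Fin p → ℝ) (l : ℝ) :
    (s + l • h) ⬝ᵥ M *ᵥ (s + l • h)
      = s ⬝ᵥ M *ᵥ s + 2 * l * (h ⬝ᵥ M *ᵥ s) + l ^ 2 * (h ⬝ᵥ M *ᵥ h) := by
  have hc : s ⬝ᵥ M *ᵥ h = h ⬝ᵥ M *ᵥ s := aux_cross hM s h
  rw [Matrix.mulVec_add, Matrix.mulVec_smul, dotProduct_add, add_dotProduct, add_dotProduct,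
    dotProduct_smul, smul_dotProduct, smul_dotProduct, dotProduct_smul, hc]
  simp only [smul_eq_mul]
  ring

lemma aux_hull_weights {p : ℕ} {I : Type} [Fintype I] (τ : I → Fin p → ℝ) {s : Fin p → ℝ}
    (hs : s ∈ convexHull ℝ (Set.range τ)) :
    ∃ w : I → ℝ, (∀ i, 0 ≤ w i) ∧ ∑ i, w i = 1 ∧ ∑ i, w i • τ i = s := by
  classical
  rw [convexHull_range_eq_exists_affineCombination] at hs
  obtain ⟨t, w, hw0, hw1, hcomb⟩ := hs
  rw [Finset.affineCombination_eq_linear_combination t τ w hw1] at hcomb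
  refine ⟨fun i => if i ∈ t then w i else 0, fun i => ?_, ?_, ?_⟩
  · by_cases hi : i ∈ t <;> simp [hi]
    exact hw0 i hi
  · rw [Finset.sum_ite_mem, Finset.univ_inter]; exact hw1
  · rw [← hcomb]
    have : ∀ i : I, (if i ∈ t then w i else 0) • τ i = (if i ∈ t then w i • τ i else 0) := by
      intro i; split <;> simp
    simp only [this]
    rw [Finset.sum_ite_mem, Finset.univ_inter]

set_option maxHeartbeats 1000000 in
lemma core {p : ℕ} {I : Type} [Fintype I] [Nonempty I] {M : Matrix (Fin p) (Fin p) ℝ}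
    (hM : M.IsSymm) (τ : I → Fin p → ℝ)
    (hτ0 : ∀ i k, 0 ≤ τ i k) (hτ1 : ∀ i, ∑ k, τ i k = 1)
    {ε₀ : ℝ}
    (hεsmall : ∀ i k, 0 < τ i k → ε₀ ≤ τ i k / (16 * (Fintype.card I : ℝ)))
    (hMτ : ∀ i k, 0 ≤ (M *ᵥ τ i) k)
    (hfar : ∀ t : Fin p → ℝ, (∀ k, 0 ≤ t k) → (∑ k, t k) = 1 →
        (∀ s ∈ convexHull ℝ (Set.range τ), ε₀ ≤ Real.sqrt (∑ k, (t k - s k) ^ 2)) →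
        0 ≤ t ⬝ᵥ M *ᵥ t) :
    ∀ t : Fin p → ℝ, (∀ k, 0 ≤ t k) → (∑ k, t k) = 1 → 0 ≤ t ⬝ᵥ M *ᵥ t := by
  classical
  set N : ℝ := (Fintype.card I : ℝ) with hN
  have hN1 : 1 ≤ N := by
    have h : (1:ℕ) ≤ Fintype.card I := Fintype.card_pos
    rw [hN]
    exact_mod_cast h
  set η : ℝ := 1 / (4 * N) with hη
  have hηpos : 0 < η := by positivity
  have key : ∀ m : ℕ, ∀ t : Fin p → ℝ, (∀ k, 0 ≤ t k) → (∑ k, t k) = 1 →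
      (Finset.univ.filter fun k => 0 < t k).card = m → 0 ≤ t ⬝ᵥ M *ᵥ t := by
    intro m
    induction m using Nat.strong_induction_on with
    | _ m IH =>
    intro t ht0 ht1 hcard
    by_contra hneg
    push_neg at hneg
    -- extract a nearby hull point
    have hnear : ∃ s₀ ∈ convexHull ℝ (Set.range τ), Real.sqrt (∑ k, (t k - s₀ k) ^ 2) < ε₀ := by
      by_contra hc
      push_neg at hc
      exact absurd (hfar t ht0 ht1 hc) (not_le.mpr hneg)
    obtain ⟨s₀, hs₀mem, hs₀close⟩ := hnear
    have hclose : ∀ k, |t k - s₀ k| < ε₀ := by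
      intro k
      have h1 : (t k - s₀ k) ^ 2 ≤ ∑ j, (t j - s₀ j) ^ 2 :=
        Finset.single_le_sum (f := fun j => (t j - s₀ j) ^ 2)
          (fun j _ => sq_nonneg _) (Finset.mem_univ k)
      calc |t k - s₀ k| = Real.sqrt ((t k - s₀ k) ^ 2) := (Real.sqrt_sq_eq_abs _).symm
        _ ≤ Real.sqrt (∑ j, (t j - s₀ j) ^ 2) := Real.sqrt_le_sqrt h1
        _ < ε₀ := hs₀close
    obtain ⟨w, hw0, hw1, hwsum⟩ := aux_hull_weights τ hs₀mem
    set Aset : Finset I := Finset.univ.filter (fun i => η ≤ w i) with hAset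
    set W : ℝ := ∑ i ∈ Aset, w i with hW
    have hWle : W ≤ 1 := by
      rw [← hw1]
      exact Finset.sum_le_sum_of_subset_of_nonneg (Finset.subset_univ _)
        (fun i _ _ => hw0 i)
    have hW34 : 3 / 4 ≤ W := by
      have hsplit : ∑ i ∈ Finset.univ \ Aset, w i + ∑ i ∈ Aset, w i = 1 := by
        rw [Finset.sum_sdiff (Finset.subset_univ _)]; exact hw1
      have hbound : ∑ i ∈ Finset.univ \ Aset, w i ≤ ((Finset.univ \ Aset).card : ℝ) * η := by
        have := Finset.sum_le_card_nsmul (Finset.univ \ Aset) w η (by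
          intro i hi
          have : ¬ η ≤ w i := by
            intro hcon
            have := Finset.mem_sdiff.mp hi
            exact this.2 (Finset.mem_filter.mpr ⟨Finset.mem_univ i, hcon⟩)
          linarith [lt_of_not_ge this])
        simpa [nsmul_eq_mul] using this
      have hcardle : ((Finset.univ \ Aset).card : ℝ) ≤ N := by
        rw [hN, ← Finset.card_univ]
        exact_mod_cast Finset.card_le_card (Finset.sdiff_subset)
      have : ((Finset.univ \ Aset).card : ℝ) * η ≤ N * η :=
        mul_le_mul_of_nonneg_right hcardle (le_of_lt hηpos)
      have hNη : N * η = 1 / 4 := by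
        rw [hη]; field_simp
      linarith
    have hWpos : 0 < W := by linarith
    set s : Fin p → ℝ := W⁻¹ • ∑ i ∈ Aset, w i • τ i with hs_def
    have hsk : ∀ k, s k = W⁻¹ * ∑ i ∈ Aset, w i * τ i k := by
      intro k
      simp [hs_def, Finset.sum_apply]
    have hs0 : ∀ k, 0 ≤ s k := by
      intro k
      rw [hsk k]
      apply mul_nonneg (by positivity)
      exact Finset.sum_nonneg fun i _ => mul_nonneg (hw0 i) (hτ0 i k)
    have hsmem : s ∈ convexHull ℝ (Set.range τ) := by
      have := Finset.centerMass_mem_convexHull Aset (fun i _ => hw0 i)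
        (by rw [← hW] at *; exact hWpos) (fun i _ => Set.mem_range_self (f := τ) i)
      simpa [Finset.centerMass, hs_def, ← hW] using this
    have hssum : ∑ k, s k = 1 := by
      have e1 : ∑ k, s k = W⁻¹ * ∑ i ∈ Aset, w i * ∑ k, τ i k := by
        simp only [hsk]
        rw [← Finset.mul_sum, Finset.sum_comm]
        congr 1
        exact Finset.sum_congr rfl fun i _ => (Finset.mul_sum _ _ _).symm
      rw [e1]
      simp only [hτ1, mul_one]
      rw [← hW]
      field_simp
    have hMs : ∀ k, 0 ≤ (M *ᵥ s) k := by
      intro k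
      have hlin : M *ᵥ s = W⁻¹ • ∑ i ∈ Aset, w i • (M *ᵥ τ i) := by
        rw [hs_def, Matrix.mulVec_smul]
        congr 1
        rw [← Matrix.mulVecLin_apply, map_sum]
        exact Finset.sum_congr rfl fun i _ => by rw [_root_.map_smul, Matrix.mulVecLin_apply]
      rw [hlin]
      have : 0 ≤ (∑ i ∈ Aset, w i • (M *ᵥ τ i)) k := by
        rw [Finset.sum_apply]
        exact Finset.sum_nonneg fun i _ => mul_nonneg (hw0 i) (hMτ i k)
      simpa using mul_nonneg (by positivity : (0:ℝ) ≤ W⁻¹) this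
    have hs₀k : ∀ k, s₀ k = ∑ i, w i * τ i k := by
      intro k
      rw [← hwsum]
      simp [Finset.sum_apply]
    have hsle : ∀ k, s k ≤ 2 * t k := by
      intro k
      by_cases hP : ∑ i ∈ Aset, w i * τ i k = 0
      · rw [hsk k, hP, mul_zero]
        linarith [ht0 k]
      · have hPnonneg : 0 ≤ ∑ i ∈ Aset, w i * τ i k :=
          Finset.sum_nonneg fun i _ => mul_nonneg (hw0 i) (hτ0 i k)
        have hPpos : 0 < ∑ i ∈ Aset, w i * τ i k := lt_of_le_of_ne hPnonneg (Ne.symm hP)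
        obtain ⟨i, hiA, hipos⟩ : ∃ i ∈ Aset, 0 < w i * τ i k := by
          by_contra hc
          push_neg at hc
          have : ∑ i ∈ Aset, w i * τ i k ≤ 0 := Finset.sum_nonpos hc
          linarith
        have hτik : 0 < τ i k := by
          rcases (hτ0 i k).lt_or_eq with hpos | heq
          · exact hpos
          · rw [← heq, mul_zero] at hipos; exact absurd hipos (lt_irrefl 0)
        have hwi : η ≤ w i := (Finset.mem_filter.mp hiA).2
        have hsklb : η * τ i k ≤ s k := by
          rw [hsk k]
          have h1 : w i * τ i k ≤ ∑ i ∈ Aset, w i * τ i k :=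
            Finset.single_le_sum (fun j _ => mul_nonneg (hw0 j) (hτ0 j k)) hiA
          have h2 : η * τ i k ≤ w i * τ i k :=
            mul_le_mul_of_nonneg_right hwi (le_of_lt hτik)
          have h3 : ∑ i ∈ Aset, w i * τ i k ≤ W⁻¹ * ∑ i ∈ Aset, w i * τ i k := by
            have hinv : 1 ≤ W⁻¹ := (one_le_inv_iff₀).mpr ⟨hWpos, hWle⟩
            nlinarith
          linarith
        have hWsk : W * s k ≤ s₀ k := by
          rw [hsk k, hs₀k k]
          have : W * (W⁻¹ * ∑ i ∈ Aset, w i * τ i k) = ∑ i ∈ Aset, w i * τ i k := by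
            field_simp
          rw [this]
          exact Finset.sum_le_sum_of_subset_of_nonneg (Finset.subset_univ _)
            (fun j _ _ => mul_nonneg (hw0 j) (hτ0 j k))
        have hεk : ε₀ ≤ s k / 4 := by
          have := hεsmall i k hτik
          have hNne : N ≠ 0 := by linarith
          have heq : τ i k / (16 * N) = (η * τ i k) / 4 := by
            rw [hη, one_div, inv_mul_eq_div, div_div]; ring_nf
          rw [heq] at this
          linarith
        have htk : s₀ k - ε₀ < t k := by
          have := hclose k
          have := abs_lt.mp this
          linarith [this.1]
        nlinarith [hs0 k, mul_nonneg (by linarith : (0:ℝ) ≤ W - 3/4) (hs0 k)]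
    -- the direction vector
    set h : Fin p → ℝ := t - s with hh_def
    have hhk : ∀ k, h k = t k - s k := fun k => rfl
    have hsumh : ∑ k, h k = 0 := by
      simp only [hhk, Finset.sum_sub_distrib, ht1, hssum, sub_self]
    have ha : 0 ≤ s ⬝ᵥ M *ᵥ s := by
      rw [show s ⬝ᵥ M *ᵥ s = ∑ k, s k * (M *ᵥ s) k from rfl]
      exact Finset.sum_nonneg fun k _ => mul_nonneg (hs0 k) (hMs k)
    have hb : -(s ⬝ᵥ M *ᵥ s) ≤ 2 * (h ⬝ᵥ M *ᵥ s) := by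
      have e1 : 2 * (h ⬝ᵥ M *ᵥ s) = ∑ k, 2 * (h k * (M *ᵥ s) k) := by
        rw [show h ⬝ᵥ M *ᵥ s = ∑ k, h k * (M *ᵥ s) k from rfl, Finset.mul_sum]
      have e2 : -(s ⬝ᵥ M *ᵥ s) = ∑ k, -(s k * (M *ᵥ s) k) := by
        rw [show s ⬝ᵥ M *ᵥ s = ∑ k, s k * (M *ᵥ s) k from rfl, ← Finset.sum_neg_distrib]
      rw [e1, e2]
      apply Finset.sum_le_sum
      intro k _
      have h1 := hMs k
      have h2 := hsle k
      have h3 : 0 ≤ (2 * t k - s k) * (M *ᵥ s) k := mul_nonneg (by linarith) h1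
      have h4 := hhk k
      nlinarith
    have hex : ∃ j, h j < 0 := by
      by_contra hc
      push_neg at hc
      have hz := (Finset.sum_eq_zero_iff_of_nonneg (fun j _ => hc j)).mp hsumh
      have hts : t = s := by
        funext k
        have h5 : h k = 0 := hz k (Finset.mem_univ k)
        rw [hhk k] at h5
        linarith
      rw [hts] at hneg
      exact absurd ha (not_le.mpr hneg)
    set Jneg := Finset.univ.filter (fun j => h j < 0) with hJ
    have hJne : Jneg.Nonempty := by
      obtain ⟨j, hj⟩ := hex
      exact ⟨j, Finset.mem_filter.mpr ⟨Finset.mem_univ j, hj⟩⟩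
    set L := Jneg.inf' hJne (fun j => s j / (-h j)) with hLdef
    have hL2 : 2 ≤ L := by
      apply Finset.le_inf'
      intro j hj
      have hhj : h j < 0 := (Finset.mem_filter.mp hj).2
      have h2 : s j ≤ 2 * t j := hsle j
      have h4 := hhk j
      rw [le_div_iff₀ (by linarith : (0:ℝ) < -h j)]
      linarith
    have hLpos : 0 < L := by linarith
    obtain ⟨j₀, hj₀mem, hj₀⟩ := Finset.exists_mem_eq_inf' hJne (fun j => s j / (-h j))
    have hhj₀ : h j₀ < 0 := (Finset.mem_filter.mp hj₀mem).2
    have hLh₀ : L * h j₀ = -(s j₀) := by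
      rw [hLdef, hj₀]
      have hne : h j₀ ≠ 0 := ne_of_lt hhj₀
      field_simp
    have hsj₀pos : 0 < s j₀ := by
      have h5 : L * -h j₀ = -(L * h j₀) := by ring
      have h6 := mul_pos hLpos (neg_pos.mpr hhj₀)
      linarith
    have htj₀pos : 0 < t j₀ := by
      have := hsle j₀
      linarith
    set u : Fin p → ℝ := s + L • h with hu_def
    have huk : ∀ k, u k = s k + L * h k := fun k => rfl
    have hu0 : ∀ k, 0 ≤ u k := by
      intro k
      rcases le_or_gt 0 (h k) with hk | hk
      · have h5 : 0 ≤ L * h k := mul_nonneg (le_of_lt hLpos) hk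
        rw [huk k]
        linarith [hs0 k]
      · have hkJ : k ∈ Jneg := Finset.mem_filter.mpr ⟨Finset.mem_univ k, hk⟩
        have h5 : L ≤ s k / (-h k) := Finset.inf'_le (fun j => s j / (-h j)) hkJ
        have hpos : (0:ℝ) < -h k := by linarith
        have h6 : L * -h k ≤ s k := (le_div_iff₀ hpos).mp h5
        have h7 : L * -h k = -(L * h k) := by ring
        rw [huk k]
        linarith
    have husum : ∑ k, u k = 1 := by
      simp only [huk]
      rw [Finset.sum_add_distrib, ← Finset.mul_sum, hsumh, hssum, mul_zero, add_zero]
    have huj₀ : u j₀ = 0 := by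
      rw [huk j₀, hLh₀]
      ring
    have hsubset : (Finset.univ.filter fun k => 0 < u k) ⊆ (Finset.univ.filter fun k => 0 < t k) := by
      intro k hk
      have huk' := (Finset.mem_filter.mp hk).2
      refine Finset.mem_filter.mpr ⟨Finset.mem_univ k, ?_⟩
      by_contra hc
      push_neg at hc
      have htk0 : t k = 0 := le_antisymm hc (ht0 k)
      have hsk0 : s k = 0 := by
        have := hsle k
        have := hs0 k
        linarith
      have hhk0 : h k = 0 := by rw [hhk k, htk0, hsk0]; ring
      rw [huk k, hsk0, hhk0] at huk'
      simp at huk'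
    have hcardlt : (Finset.univ.filter fun k => 0 < u k).card < m := by
      rw [← hcard]
      apply Finset.card_lt_card
      rw [Finset.ssubset_iff_of_subset hsubset]
      refine ⟨j₀, Finset.mem_filter.mpr ⟨Finset.mem_univ _, htj₀pos⟩, ?_⟩
      simp [Finset.mem_filter, huj₀]
    have hIH := IH _ hcardlt u hu0 husum rfl
    have hts' : t = s + (1:ℝ) • h := by
      funext k
      have := hhk k
      simp only [Pi.add_apply, Pi.smul_apply, smul_eq_mul, one_mul]
      linarith
    have hqt : t ⬝ᵥ M *ᵥ t
        = s ⬝ᵥ M *ᵥ s + 2 * 1 * (h ⬝ᵥ M *ᵥ s) + 1^2 * (h ⬝ᵥ M *ᵥ h) := by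
      conv_lhs => rw [hts']
      exact aux_expand hM s h 1
    have hqu : u ⬝ᵥ M *ᵥ u
        = s ⬝ᵥ M *ᵥ s + 2 * L * (h ⬝ᵥ M *ᵥ s) + L^2 * (h ⬝ᵥ M *ᵥ h) := by
      rw [hu_def]
      exact aux_expand hM s h L
    have hfin : u ⬝ᵥ M *ᵥ u < 0 := by
      set a := s ⬝ᵥ M *ᵥ s with hadef
      set b := h ⬝ᵥ M *ᵥ s with hbdef
      set c := h ⬝ᵥ M *ᵥ h with hcdef
      set Q := t ⬝ᵥ M *ᵥ t with hQdef
      have hcval : c = Q - a - 2*b := by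
        rw [hqt]; ring
      rw [hqu, hcval]
      have e : a + 2*L*b + L^2*(Q - a - 2*b)
          = (2*b + a)*(L - L^2) + a*(1 - L) + L^2*Q := by ring
      rw [e]
      have p1 : (2*b + a)*(L - L^2) ≤ 0 := by
        apply mul_nonpos_of_nonneg_of_nonpos (by linarith)
        nlinarith [mul_nonneg (le_of_lt hLpos) (by linarith : (0:ℝ) ≤ L - 1)]
      have p2 : a*(1 - L) ≤ 0 := mul_nonpos_of_nonneg_of_nonpos ha (by linarith)
      have p3 : L^2*Q < 0 := mul_neg_of_pos_of_neg (pow_pos hLpos 2) hneg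
      linarith
    exact absurd hIH (not_le.mpr hfin)
  intro t ht0 ht1
  exact key _ t ht0 ht1 rfl

lemma amap_symm {p n : ℕ} {A₀ : Matrix (Fin p) (Fin p) ℝ}
    {A : Fin n → Matrix (Fin p) (Fin p) ℝ} (hA₀ : A₀.IsSymm) (hA : ∀ i, (A i).IsSymm)
    (x : Fin n → ℝ) : (Amap p n A₀ A x).IsSymm := by
  unfold Matrix.IsSymm Amap
  rw [Matrix.transpose_add, Matrix.transpose_sum, hA₀.eq]
  congr 1
  exact Finset.sum_congr rfl fun i _ => by rw [Matrix.transpose_smul, (hA i).eq]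

lemma scale_nonneg {p : ℕ} {M : Matrix (Fin p) (Fin p) ℝ}
    (hnorm : ∀ t : Fin p → ℝ, (∀ k, 0 ≤ t k) → (∑ k, t k) = 1 → 0 ≤ t ⬝ᵥ M *ᵥ t) :
    ∀ t : Fin p → ℝ, (∀ k, 0 ≤ t k) → 0 ≤ t ⬝ᵥ M *ᵥ t := by
  intro t ht
  by_cases hS : ∑ k, t k = 0
  · have ht0 : t = 0 := by
      funext k
      have := (Finset.sum_eq_zero_iff_of_nonneg (fun k _ => ht k)).mp hS k (Finset.mem_univ k)
      simpa using this
    rw [ht0]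
    simp
  · have hSpos : 0 < ∑ k, t k := lt_of_le_of_ne (Finset.sum_nonneg fun k _ => ht k) (Ne.symm hS)
    set S := ∑ k, t k with hSdef
    set t' : Fin p → ℝ := S⁻¹ • t with ht'def
    have ht'0 : ∀ k, 0 ≤ t' k := fun k => mul_nonneg (by positivity) (ht k)
    have ht'1 : ∑ k, t' k = 1 := by
      simp only [ht'def, Pi.smul_apply, smul_eq_mul, ← Finset.mul_sum, ← hSdef]
      field_simp
    have h1 := hnorm t' ht'0 ht'1
    have hSne : S ≠ 0 := ne_of_gt hSpos
    have hexp2 : t ⬝ᵥ M *ᵥ t = S * (S * (t' ⬝ᵥ M *ᵥ t')) := by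
      have htt : t = S • t' := by
        funext k
        simp only [ht'def, Pi.smul_apply, smul_eq_mul]
        field_simp
      conv_lhs => rw [htt]
      rw [Matrix.mulVec_smul, smul_dotProduct, dotProduct_smul]
      simp [smul_eq_mul]
    rw [hexp2]
    exact mul_nonneg hSpos.le (mul_nonneg hSpos.le h1)

lemma feas_mulVec_nonneg {p n : ℕ} {A₀ : Matrix (Fin p) (Fin p) ℝ}
    {A : Fin n → Matrix (Fin p) (Fin p) ℝ} (hA₀ : A₀.IsSymm) (hA : ∀ i, (A i).IsSymm)
    {x : Fin n → ℝ} (hx : x ∈ feasSet p n A₀ A) {τ : Fin p → ℝ}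
    (hτ0 : ∀ k, 0 ≤ τ k) (hτq : τ ⬝ᵥ (Amap p n A₀ A x *ᵥ τ) = 0) :
    ∀ k, 0 ≤ (Amap p n A₀ A x *ᵥ τ) k := by
  classical
  intro k
  set M := Amap p n A₀ A x with hMdef
  have hM : M.IsSymm := amap_symm hA₀ hA x
  by_contra hc
  push_neg at hc
  set c := (M *ᵥ τ) k with hcdef
  -- e_k
  set e : Fin p → ℝ := Pi.single k 1 with hedef
  have hcross : e ⬝ᵥ M *ᵥ τ = c := by
    rw [hedef, single_dotProduct, one_mul, hcdef]
  have hcross' : τ ⬝ᵥ M *ᵥ e = c := by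
    rw [← hcross]
    conv_lhs => rw [Matrix.dotProduct_mulVec, ← hM.eq, Matrix.vecMul_transpose]
    exact dotProduct_comm _ _
  have hdkk : 0 ≤ e ⬝ᵥ M *ᵥ e := by
    apply hx
    intro j
    rw [hedef]
    by_cases hj : j = k
    · subst hj; simp
    · simp [Pi.single_apply, hj]
  set d := e ⬝ᵥ M *ᵥ e with hddef
  have hkey : ∀ α : ℝ, 0 ≤ α → 0 ≤ 2 * α * c + α ^ 2 * d := by
    intro α hα
    have h1 : ∀ j, 0 ≤ (τ + α • e) j := by
      intro j
      have := hτ0 j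
      rw [hedef]
      by_cases hj : j = k
      · subst hj; simp [Pi.single_apply]; positivity
      · simp [Pi.single_apply, hj]; linarith
    have h2 := hx (τ + α • e) h1
    have hexp : (τ + α • e) ⬝ᵥ M *ᵥ (τ + α • e)
        = τ ⬝ᵥ M *ᵥ τ + 2 * α * (e ⬝ᵥ M *ᵥ τ) + α ^ 2 * (e ⬝ᵥ M *ᵥ e) := by
      have hc2 : τ ⬝ᵥ M *ᵥ e = e ⬝ᵥ M *ᵥ τ := by rw [hcross, hcross']
      rw [Matrix.mulVec_add, Matrix.mulVec_smul, dotProduct_add, add_dotProduct, add_dotProduct,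
        dotProduct_smul, smul_dotProduct, smul_dotProduct, dotProduct_smul, hc2]
      simp only [smul_eq_mul]
      ring
    rw [hexp, hτq, hcross] at h2
    linarith
  rcases eq_or_lt_of_le hdkk with hd0 | hdpos
  · have := hkey 1 zero_le_one
    rw [← hd0] at this
    simp at this
    linarith
  · have hdne : d ≠ 0 := ne_of_gt hdpos
    have hαval : 2 * (-c / d) * c + (-c / d) ^ 2 * d = -(c ^ 2) / d := by
      field_simp
      ring
    have h8 := hkey (-c / d) (div_nonneg (by linarith) hdpos.le)
    rw [hαval, neg_div] at h8
    have hc2 : 0 < c ^ 2 := by nlinarith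
    have h9 : 0 < c ^ 2 / d := div_pos hc2 hdpos
    linarith

set_option maxHeartbeats 1000000 in
/-- Lemma 1: given finitely many normalized immobile indices
`τ(i), i ∈ I ≠ ∅`, there is `ε₀ > 0` such that the set `𝒳(ε₀)` of points `x`
satisfying `𝓐(x)τ(i) ≥ 0` for all `i ∈ I` together with `tᵀ𝓐(x)t ≥ 0` for all
`t ∈ T` whose Euclidean distance to `conv{τ(i) : i ∈ I}` is at least `ε₀`,
coincides with the feasible set `X`.  (The distance condition
`ρ(t, conv{τ(i)}) ≥ ε₀` is expressed equivalently as `‖t - s‖ ≥ ε₀` for every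
`s` in the convex hull, which is nonempty.) -/
theorem exists_eps_cutset_eq_feasSet (p n : ℕ) (hp : 1 ≤ p) (hn : 1 ≤ n)
    (A₀ : Matrix (Fin p) (Fin p) ℝ) (A : Fin n → Matrix (Fin p) (Fin p) ℝ)
    (hA₀ : A₀.IsSymm) (hA : ∀ i, (A i).IsSymm)
    {I : Type} [Fintype I] [Nonempty I] (τ : I → Fin p → ℝ)
    (hτ : ∀ i, τ i ∈ normImmobile p n A₀ A) :
    ∃ ε₀ : ℝ, 0 < ε₀ ∧
      {x : Fin n → ℝ |
          (∀ i, ∀ k, 0 ≤ (Amap p n A₀ A x *ᵥ τ i) k) ∧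
          ∀ t : Fin p → ℝ, (∀ k, 0 ≤ t k) → (∑ k, t k) = 1 →
            (∀ s ∈ convexHull ℝ (Set.range τ),
              ε₀ ≤ Real.sqrt (∑ k, (t k - s k) ^ 2)) →
            0 ≤ t ⬝ᵥ (Amap p n A₀ A x *ᵥ t)} = feasSet p n A₀ A := by
  classical
  have hsupp : ∀ i : I, (Finset.univ.filter fun k => 0 < τ i k).Nonempty := by
    intro i
    by_contra hc
    rw [Finset.not_nonempty_iff_eq_empty] at hc
    have hzero : ∑ k, τ i k = 0 := by
      apply Finset.sum_eq_zero
      intro k _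
      by_contra hk
      have hpos : 0 < τ i k := lt_of_le_of_ne ((hτ i).1 k) (Ne.symm hk)
      have : k ∈ Finset.univ.filter fun k => 0 < τ i k :=
        Finset.mem_filter.mpr ⟨Finset.mem_univ k, hpos⟩
      rw [hc] at this
      exact absurd this (Finset.notMem_empty k)
    rw [(hτ i).2.1] at hzero
    exact one_ne_zero hzero
  have hneFin : (Finset.univ : Finset I).Nonempty := Finset.univ_nonempty
  set mhat : ℝ := Finset.univ.inf' hneFin
    (fun i => (Finset.univ.filter fun k => 0 < τ i k).inf' (hsupp i) (τ i)) with hmhat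
  have hmpos : 0 < mhat := by
    rw [hmhat, Finset.lt_inf'_iff]
    intro i _
    rw [Finset.lt_inf'_iff]
    intro k hk
    exact (Finset.mem_filter.mp hk).2
  have hmle : ∀ i k, 0 < τ i k → mhat ≤ τ i k := by
    intro i k hk
    calc mhat ≤ (Finset.univ.filter fun k => 0 < τ i k).inf' (hsupp i) (τ i) :=
          Finset.inf'_le _ (Finset.mem_univ i)
      _ ≤ τ i k := Finset.inf'_le _ (Finset.mem_filter.mpr ⟨Finset.mem_univ k, hk⟩)
  have hN1 : (1:ℝ) ≤ (Fintype.card I : ℝ) := by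
    have h : (1:ℕ) ≤ Fintype.card I := Fintype.card_pos
    exact_mod_cast h
  set ε₀ : ℝ := mhat / (16 * (Fintype.card I : ℝ)) with hε₀def
  have hε₀pos : 0 < ε₀ := div_pos hmpos (by linarith)
  have hεsmall : ∀ i k, 0 < τ i k → ε₀ ≤ τ i k / (16 * (Fintype.card I : ℝ)) := by
    intro i k hk
    rw [hε₀def]
    gcongr
    exact hmle i k hk
  refine ⟨ε₀, hε₀pos, ?_⟩
  ext x
  simp only [Set.mem_setOf_eq]
  constructor
  · rintro ⟨h1, h2⟩
    intro t ht
    refine scale_nonneg ?_ t ht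
    exact core (amap_symm hA₀ hA x) τ (fun i => (hτ i).1) (fun i => (hτ i).2.1)
      hεsmall h1 h2
  · intro hx
    refine ⟨fun i => feas_mulVec_nonneg hA₀ hA hx ((hτ i).1) ((hτ i).2.2 x hx), ?_⟩
    intro t ht _ _
    exact hx t ht
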